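/- (Capacity from the smallest positive pole.) Let w : ℕ → ℝ be a weight sequence satisfying the density condition and let N : ℕ → ℝ be coefficients. Let p, q ≥ 1, let n₁,…,n_p and d₁,…,d_q be real numbers, let τ₁,…,τ_p ≥ 0 and ν₁,…,ν_q ≥ 0 be real exponents, and set Nm(y) = ∑_{i=1}^p n_i·y^(τ_i) and D(y) = ∑_{j=1}^q d_j·y^(ν_j). Suppose there is a real P > 0 such that: (i) for every y ∈ (0, P) the series ∑_k N k · y^(w k) converges, D(y) ≠ 0, and ∑_k N k · y^(w k) = Nm(y)/D(y); (ii) D(P) = 0 and Nm(P) ≠ 0. Then the capacity C = limsup_{k→∞} (ln (N k))/(w k) equals −ln P. -/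

import Mathlib

/-- A weight sequence: strictly increasing and nonnegative. -/
def IsWeightSeq (w : ℕ → ℝ) : Prop :=
  StrictMono w ∧ ∀ k, 0 ≤ w k

/-- The density condition: the number of indices `k` with `w k < n` is at most `L * n ^ K`. -/
def DensityCond (w : ℕ → ℝ) : Prop :=
  ∃ L K : ℝ, 0 ≤ L ∧ 0 ≤ K ∧ ∀ n : ℕ,
    {k : ℕ | w k < (n : ℝ)}.Finite ∧
    ((Set.ncard {k : ℕ | w k < (n : ℝ)} : ℝ) ≤ L * (n : ℝ) ^ K)

open Filter Real Asymptotics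

lemma capacity_aux_w_lower (w : ℕ → ℝ) (hmono : Monotone w) {L K : ℝ}
    (h : ∀ n : ℕ, {k : ℕ | w k < (n : ℝ)}.Finite ∧
      ((Set.ncard {k : ℕ | w k < (n : ℝ)} : ℝ) ≤ L * (n : ℝ) ^ K))
    (n k : ℕ) (hk : L * (n : ℝ) ^ K ≤ k) : (n : ℝ) ≤ w k := by
  by_contra hlt
  push_neg at hlt
  have hsub : ((Finset.Iic k : Finset ℕ) : Set ℕ) ⊆ {j : ℕ | w j < (n : ℝ)} := by
    intro j hj
    exact lt_of_le_of_lt (hmono (by simpa using hj)) hlt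
  have hcard := Set.ncard_le_ncard hsub (h n).1
  rw [Set.ncard_coe_finset, Nat.card_Iic] at hcard
  have h2 := (h n).2
  have : ((k : ℝ) + 1) ≤ L * (n : ℝ) ^ K := by
    calc ((k : ℝ) + 1) = ((k + 1 : ℕ) : ℝ) := by push_cast; ring
    _ ≤ (Set.ncard {j : ℕ | w j < (n : ℝ)} : ℝ) := by exact_mod_cast hcard
    _ ≤ L * (n : ℝ) ^ K := h2
  linarith

lemma capacity_aux_w_ev (w : ℕ → ℝ) (hmono : Monotone w) {L K : ℝ}
    (h : ∀ n : ℕ, {k : ℕ | w k < (n : ℝ)}.Finite ∧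
      ((Set.ncard {k : ℕ | w k < (n : ℝ)} : ℝ) ≤ L * (n : ℝ) ^ K))
    (b : ℝ) : ∀ᶠ k in atTop, b ≤ w k := by
  filter_upwards [eventually_ge_atTop ⌈L * (⌈b⌉₊ : ℝ) ^ K⌉₊] with k hk
  have h1 : L * ((⌈b⌉₊ : ℕ) : ℝ) ^ K ≤ k :=
    le_trans (Nat.le_ceil _) (Nat.cast_le.mpr hk)
  exact le_trans (Nat.le_ceil b) (capacity_aux_w_lower w hmono h ⌈b⌉₊ k h1)

lemma capacity_aux_summable (w : ℕ → ℝ) (hmono : Monotone w) {L K : ℝ}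
    (hL : 0 ≤ L) (hK : 0 ≤ K)
    (h : ∀ n : ℕ, {k : ℕ | w k < (n : ℝ)}.Finite ∧
      ((Set.ncard {k : ℕ | w k < (n : ℝ)} : ℝ) ≤ L * (n : ℝ) ^ K))
    {δ : ℝ} (hδ : 0 < δ) :
    Summable (fun k : ℕ => Real.exp (-δ * w k)) := by
  set C₀ : ℝ := L * (2 / δ + 1) ^ K with hC₀
  have hC₀0 : 0 ≤ C₀ := mul_nonneg hL (rpow_nonneg (by positivity) _)
  have hlit := isLittleO_log_rpow_rpow_atTop K (one_pos (α := ℝ))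
  have hev0 : ∀ᶠ x : ℝ in atTop, C₀ * Real.log x ^ K ≤ x := by
    have hpos : (0 : ℝ) < 1 / (C₀ + 1) := by positivity
    filter_upwards [hlit.def hpos, eventually_ge_atTop (1 : ℝ)] with x hx hx1
    have hx0 : (0 : ℝ) ≤ x := le_trans zero_le_one hx1
    have hlog0 : 0 ≤ Real.log x := Real.log_nonneg hx1
    rw [Real.norm_eq_abs, Real.norm_eq_abs, Real.rpow_one,
      abs_of_nonneg (rpow_nonneg hlog0 _), abs_of_nonneg hx0] at hx
    calc C₀ * Real.log x ^ K ≤ C₀ * (1 / (C₀ + 1) * x) :=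
          mul_le_mul_of_nonneg_left hx hC₀0
      _ ≤ x := by
          rw [← mul_assoc]
          have h1 : C₀ * (1 / (C₀ + 1)) ≤ 1 := by
            rw [mul_one_div, div_le_one (by positivity)]; linarith
          nlinarith
  have hev : ∀ᶠ k : ℕ in atTop, 2 * Real.log k / δ ≤ w k := by
    have hnat := tendsto_natCast_atTop_atTop (R := ℝ) |>.eventually hev0
    filter_upwards [hnat, eventually_ge_atTop 3] with k hk hk3
    have hlogk : (1 : ℝ) ≤ Real.log k := by
      have : Real.exp 1 ≤ (k : ℝ) := by
        have := Real.exp_one_lt_d9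
        have h3 : (3 : ℝ) ≤ (k : ℝ) := by exact_mod_cast hk3
        linarith
      calc (1:ℝ) = Real.log (Real.exp 1) := (Real.log_exp 1).symm
      _ ≤ Real.log k := Real.log_le_log (Real.exp_pos 1) this
    set m : ℕ := ⌈2 * Real.log k / δ⌉₊ with hm
    have hx0 : (0:ℝ) ≤ 2 * Real.log k / δ := by positivity
    have hmle : (m : ℝ) ≤ 2 / δ * Real.log k + 1 := by
      have := (Nat.ceil_lt_add_one hx0).le
      calc (m:ℝ) ≤ 2 * Real.log k / δ + 1 := this
        _ = 2 / δ * Real.log k + 1 := by ring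
    have hmle2 : (m : ℝ) ≤ (2 / δ + 1) * Real.log k := by
      calc (m:ℝ) ≤ 2 / δ * Real.log k + 1 := hmle
        _ ≤ 2 / δ * Real.log k + 1 * Real.log k := by linarith
        _ = (2 / δ + 1) * Real.log k := by ring
    have hLm : L * (m : ℝ) ^ K ≤ (k : ℝ) := by
      have h1 : (m : ℝ) ^ K ≤ ((2 / δ + 1) * Real.log k) ^ K :=
        Real.rpow_le_rpow (Nat.cast_nonneg m) hmle2 hK
      have h2 : ((2 / δ + 1) * Real.log k) ^ K = (2 / δ + 1) ^ K * Real.log k ^ K :=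
        Real.mul_rpow (by positivity) (by linarith)
      calc L * (m : ℝ) ^ K ≤ L * ((2 / δ + 1) ^ K * Real.log k ^ K) := by
            rw [← h2]; exact mul_le_mul_of_nonneg_left h1 hL
        _ = C₀ * Real.log k ^ K := by rw [hC₀]; ring
        _ ≤ (k : ℝ) := hk
    exact le_trans (Nat.le_ceil _) (capacity_aux_w_lower w hmono h m k hLm)
  have hsum2 : Summable (fun k : ℕ => (k : ℝ) ^ (-2 : ℝ)) :=
    Real.summable_nat_rpow.2 (by norm_num)
  apply summable_of_isBigO_nat hsum2
  apply IsBigO.of_bound 1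
  filter_upwards [hev, eventually_ge_atTop 1] with k hk hk1
  have hkpos : (0 : ℝ) < (k : ℝ) := by exact_mod_cast Nat.lt_of_lt_of_le zero_lt_one hk1
  rw [one_mul, Real.norm_eq_abs, Real.norm_eq_abs, abs_of_nonneg (Real.exp_nonneg _),
    abs_of_nonneg (rpow_nonneg hkpos.le _)]
  rw [Real.rpow_def_of_pos hkpos]
  apply Real.exp_le_exp.2
  have : 2 * Real.log k ≤ δ * w k := by
    rw [div_le_iff₀ hδ] at hk; linarith [hk]
  nlinarith [this]

/-- Capacity from the smallest positive pole of a generating function that is a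
ratio of generalized polynomials. -/
theorem capacity_eq_neg_log_pole (w N : ℕ → ℝ)
    (hw : IsWeightSeq w) (hdens : DensityCond w)
    (hN : ∀ k, 1 ≤ N k)
    (p q : ℕ) (hp : 1 ≤ p) (hq : 1 ≤ q)
    (n : Fin p → ℝ) (d : Fin q → ℝ)
    (τ : Fin p → ℝ) (hτ : ∀ i, 0 ≤ τ i)
    (ν : Fin q → ℝ) (hν : ∀ j, 0 ≤ ν j)
    (Nm D : ℝ → ℝ)
    (hNm : ∀ y : ℝ, Nm y = ∑ i, n i * y ^ (τ i))
    (hD : ∀ y : ℝ, D y = ∑ j, d j * y ^ (ν j))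
    (P : ℝ) (hP : 0 < P)
    (hconv : ∀ y ∈ Set.Ioo (0 : ℝ) P,
      Summable (fun k => N k * y ^ (w k)) ∧ D y ≠ 0 ∧
        (∑' k, N k * y ^ (w k)) = Nm y / D y)
    (hDP : D P = 0) (hNmP : Nm P ≠ 0) :
    Filter.atTop.limsup (fun k => Real.log (N k) / w k) = -Real.log P := by
  obtain ⟨hsm, hwnn⟩ := hw
  have hmono := hsm.monotone
  obtain ⟨L, K, hL, hK, hdc⟩ := hdens
  set f : ℕ → ℝ := fun k => Real.log (N k) / w k with hf
  have hwpos : ∀ᶠ k in atTop, 0 < w k :=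
    (capacity_aux_w_ev w hmono hdc 1).mono fun k hk => lt_of_lt_of_le one_pos hk
  have hfnn : ∀ᶠ k in atTop, 0 ≤ f k :=
    hwpos.mono fun k hk => div_nonneg (Real.log_nonneg (hN k)) hk.le
  have hupper : ∀ y ∈ Set.Ioo (0:ℝ) P, ∀ᶠ k in atTop, f k ≤ -Real.log y := by
    intro y hy
    obtain ⟨hs, -, -⟩ := hconv y hy
    filter_upwards [hs.tendsto_atTop_zero.eventually (eventually_le_nhds one_pos), hwpos]
      with k hk hkw
    have hy0 : 0 < y := hy.1
    have hNk : 0 < N k := lt_of_lt_of_le one_pos (hN k)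
    have hle : Real.log (N k) + w k * Real.log y ≤ 0 := by
      have hlp : Real.log (N k * y ^ (w k)) ≤ 0 :=
        Real.log_nonpos (by positivity) hk
      rwa [Real.log_mul hNk.ne' (Real.rpow_pos_of_pos hy0 _).ne', Real.log_rpow hy0] at hlp
    rw [div_le_iff₀ hkw]
    nlinarith [hle]
  have hhalf : (P/2) ∈ Set.Ioo (0:ℝ) P := ⟨by positivity, by linarith⟩
  have hbdd : IsBoundedUnder (· ≤ ·) atTop f :=
    isBoundedUnder_of_eventually_le (hupper (P/2) hhalf)
  have hcob : IsCoboundedUnder (· ≤ ·) atTop f :=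
    Filter.isCoboundedUnder_le_of_eventually_le atTop hfnn
  have h1 : Filter.atTop.limsup f ≤ -Real.log P := by
    by_contra hc
    push_neg at hc
    set ε := (Filter.atTop.limsup f - (-Real.log P)) / 2 with hε
    have hεpos : 0 < ε := by simp only [hε]; linarith
    have hy : P * Real.exp (-ε) ∈ Set.Ioo (0:ℝ) P := by
      constructor
      · positivity
      · have : Real.exp (-ε) < 1 := Real.exp_lt_one_iff.2 (by linarith)
        nlinarith [Real.exp_pos (-ε)]
    have hls := Filter.limsup_le_of_le hcob (hupper _ hy)
    rw [Real.log_mul hP.ne' (Real.exp_ne_zero _), Real.log_exp] at hls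
    simp only [hε] at hls hεpos
    linarith
  refine le_antisymm h1 ?_
  by_contra hc
  push_neg at hc
  set Cl := Filter.atTop.limsup f with hCl
  set δ := (-Real.log P - Cl) / 3 with hδdef
  have hδ : 0 < δ := by simp only [hδdef]; linarith
  set y' := Real.exp (-(Cl + 2*δ)) with hy'
  have hPy' : P < y' := by
    have hlog : Real.log P < -(Cl + 2*δ) := by
      have : Real.log P = -(Cl + 3*δ) := by simp only [hδdef]; ring
      rw [this]; linarith
    calc P = Real.exp (Real.log P) := (Real.exp_log hP).symm
      _ < y' := Real.exp_lt_exp.2 hlog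
  have hev1 : ∀ᶠ k in atTop, f k < Cl + δ :=
    Filter.eventually_lt_of_limsup_lt (by linarith) hbdd
  have hboundk : ∀ᶠ k in atTop, N k * y' ^ (w k) ≤ Real.exp (-δ * w k) := by
    filter_upwards [hev1, hwpos] with k hk hkw
    have hNk : 0 < N k := lt_of_lt_of_le one_pos (hN k)
    have hlog : Real.log (N k) < (Cl + δ) * w k := by
      rw [div_lt_iff₀ hkw] at hk; exact hk
    have hNle : N k ≤ Real.exp ((Cl + δ) * w k) := by
      calc N k = Real.exp (Real.log (N k)) := (Real.exp_log hNk).symm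
        _ ≤ _ := Real.exp_le_exp.2 hlog.le
    have hy'pow : y' ^ (w k) = Real.exp (-(Cl + 2*δ) * w k) := by
      rw [hy', Real.rpow_def_of_pos (Real.exp_pos _), Real.log_exp]
    rw [hy'pow]
    calc N k * Real.exp (-(Cl + 2*δ) * w k)
        ≤ Real.exp ((Cl + δ) * w k) * Real.exp (-(Cl + 2*δ) * w k) :=
          mul_le_mul_of_nonneg_right hNle (Real.exp_nonneg _)
      _ = Real.exp (-δ * w k) := by rw [← Real.exp_add]; congr 1; ring
  have hsum' : Summable (fun k => N k * y' ^ (w k)) := by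
    apply summable_of_isBigO_nat (capacity_aux_summable w hmono hL hK hdc hδ)
    apply IsBigO.of_bound 1
    filter_upwards [hboundk] with k hk
    have hNk : 0 < N k := lt_of_lt_of_le one_pos (hN k)
    rw [one_mul, Real.norm_eq_abs, Real.norm_eq_abs,
      abs_of_nonneg (Real.exp_nonneg _),
      abs_of_nonneg (by positivity : (0:ℝ) ≤ N k * y' ^ (w k))]
    exact hk
  set M := ∑' k, N k * y' ^ (w k) with hM
  have hMnn : 0 ≤ M :=
    tsum_nonneg fun k => mul_nonneg (le_trans zero_le_one (hN k))
      (Real.rpow_nonneg (Real.exp_nonneg _) _)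
  have hkey : ∀ y ∈ Set.Ioo (0:ℝ) P, Nm y / D y ≤ M ∧ 0 ≤ Nm y / D y := by
    intro y hy
    obtain ⟨hs, hD0, heq⟩ := hconv y hy
    constructor
    · rw [← heq]
      refine Summable.tsum_le_tsum (fun k => ?_) hs hsum'
      refine mul_le_mul_of_nonneg_left ?_ (le_trans zero_le_one (hN k))
      exact Real.rpow_le_rpow hy.1.le (le_of_lt (hy.2.trans hPy')) (hwnn k)
    · rw [← heq]
      exact tsum_nonneg fun k => mul_nonneg (le_trans zero_le_one (hN k))
        (Real.rpow_nonneg hy.1.le _)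
  have hNmc : Filter.Tendsto (fun y => |Nm y|) (nhds P) (nhds |Nm P|) := by
    have ht : Filter.Tendsto Nm (nhds P) (nhds (Nm P)) := by
      have hfun : Nm = fun y => ∑ i, n i * y ^ (τ i) := funext hNm
      rw [hfun]; simp only []
      exact tendsto_finset_sum _ fun i _ =>
        (continuousAt_const.mul (Real.continuousAt_rpow_const _ _ (Or.inl hP.ne')))
    exact ht.abs
  have hDc : Filter.Tendsto (fun y => |D y|) (nhds P) (nhds 0) := by
    have ht : Filter.Tendsto D (nhds P) (nhds (D P)) := by
      have hfun : D = fun y => ∑ j, d j * y ^ (ν j) := funext hD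
      rw [hfun]; simp only []
      exact tendsto_finset_sum _ fun j _ =>
        (continuousAt_const.mul (Real.continuousAt_rpow_const _ _ (Or.inl hP.ne')))
    have := ht.abs
    rwa [hDP, abs_zero] at this
  have hNmP0 : 0 < |Nm P| := abs_pos.2 hNmP
  set ε := |Nm P| / (2 * (M + 1)) with hεdef
  have hεpos : 0 < ε := by positivity
  have evA : ∀ᶠ y in nhds P, |Nm P| / 2 < |Nm y| :=
    hNmc.eventually_const_lt (half_lt_self hNmP0)
  have evB : ∀ᶠ y in nhds P, |D y| < ε := hDc.eventually_lt_const hεpos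
  have hIoo : Set.Ioo (0:ℝ) P ∈ nhdsWithin P (Set.Iio P) := by
    rw [← Set.Ioi_inter_Iio]
    exact Filter.inter_mem (mem_nhdsWithin_of_mem_nhds (Ioi_mem_nhds hP))
      self_mem_nhdsWithin
  obtain ⟨y, hyA, hyB, hyIoo⟩ :=
    (((evA.filter_mono nhdsWithin_le_nhds).and
      ((evB.filter_mono nhdsWithin_le_nhds).and
        (Filter.eventually_of_mem hIoo fun _ hy => hy)))).exists
  obtain ⟨hkle, hknn⟩ := hkey y hyIoo
  obtain ⟨-, hD0, -⟩ := hconv y hyIoo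
  have hDy : 0 < |D y| := abs_pos.2 hD0
  have habs : |Nm y| / |D y| = Nm y / D y := by
    rw [← abs_div]; exact abs_of_nonneg hknn
  have hgt : M < |Nm y| / |D y| := by
    rw [lt_div_iff₀ hDy]
    have h2 : (M+1) * |D y| < (M+1) * ε :=
      mul_lt_mul_of_pos_left hyB (by linarith)
    have h3 : (M+1) * ε = |Nm P| / 2 := by
      rw [hεdef]; field_simp
    nlinarith [hDy.le]
  rw [habs] at hgt
  linarith
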